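/- (Invariant lower bound on constraint slack along the iterates.) Let g be C² on an open set containing the compact box I ⊂ ℝ^{n_u}, with strict univariate Lipschitz constants κ_i > 0 and strict second-derivative Lipschitz constants M_{i₁i₂} > 0 on I; let Q̄ be the worst-case quadratic growth bound. Let γ ∈ [0,1) and κ̃_i ≥ 0 satisfy |∂g/∂u_i| ≤ κ̃_i ≤ γκ_i on I. Fix ε > 0 and δ > 0. Let (u_k) ⊆ I, (v_k) ⊆ I, and K_k ∈ [0,1] satisfy u_{k+1} = u_k + K_k(v_k − u_k), and for every k: (i) g(u_k) + K_k Σ_i κ_i|v_{k,i} − u_{k,i}| ≤ 0, and (ii) if g(u_k) ≥ −ε then ∇g(u_k)ᵀ(v_k − u_k) ≤ −δ. If g(u_0) < 0, then for every k: −g(u_k) ≥ min[(1 − γ)ε, 2(1 − γ)δ²/Q̄, −g(u_0)]. -/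

import Mathlib

open Finset

section Aux

private lemma fderiv_expand {n : ℕ} (L : (Fin n → ℝ) →L[ℝ] ℝ) (d : Fin n → ℝ) :
    L d = ∑ i, d i * L (Pi.single i 1) := by
  have hd : d = ∑ i, d i • (Pi.single i 1 : Fin n → ℝ) := by
    funext j
    simp [Finset.sum_apply, Pi.single_apply]
  conv_lhs => rw [hd]
  simp [map_sum, map_smul, smul_eq_mul]

private lemma seg_deriv {n : ℕ} (a d : Fin n → ℝ) (t : ℝ) :
    HasDerivAt (fun s : ℝ => a + s • d) d t := by
  simpa using ((hasDerivAt_id t).smul_const d).const_add a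

-- MVT along a segment, direction-weighted
private lemma mvt_seg {n : ℕ} {f : (Fin n → ℝ) → ℝ} {s : Set (Fin n → ℝ)}
    (hs : IsOpen s) (hf : ∀ x ∈ s, DifferentiableAt ℝ f x)
    {a d : Fin n → ℝ} (hseg : ∀ t ∈ Set.Icc (0:ℝ) 1, a + t • d ∈ s)
    {C : ℝ} (hC : ∀ t ∈ Set.Icc (0:ℝ) 1, |fderiv ℝ f (a + t • d) d| ≤ C) :
    |f (a + d) - f a| ≤ C := by
  have hder : ∀ t ∈ Set.Icc (0:ℝ) 1,
      HasDerivWithinAt (fun s : ℝ => f (a + s • d)) (fderiv ℝ f (a + t • d) d)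
        (Set.Icc 0 1) t := by
    intro t ht
    exact (((hf _ (hseg t ht)).hasFDerivAt.comp_hasDerivAt t (seg_deriv a d t))).hasDerivWithinAt
  have := (convex_Icc (0:ℝ) 1).norm_image_sub_le_of_norm_hasDerivWithin_le hder
    (fun t ht => by simpa using hC t ht) (Set.left_mem_Icc.2 zero_le_one)
    (Set.right_mem_Icc.2 zero_le_one)
  simpa [Real.norm_eq_abs] using this

private lemma fderiv_expand' {n : ℕ} {E : Type*} [NormedAddCommGroup E] [NormedSpace ℝ E]
    (L : (Fin n → ℝ) →L[ℝ] E) (d : Fin n → ℝ) :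
    L d = ∑ i, d i • L (Pi.single i 1) := by
  have hd : d = ∑ i, d i • (Pi.single i 1 : Fin n → ℝ) := by
    funext j
    simp [Finset.sum_apply, Pi.single_apply]
  conv_lhs => rw [hd]
  simp [map_sum, map_smul]

private lemma fderiv_eval {n : ℕ} {F : (Fin n → ℝ) → ((Fin n → ℝ) →L[ℝ] ℝ)} {y : Fin n → ℝ}
    (hF : DifferentiableAt ℝ F y) (w z : Fin n → ℝ) :
    fderiv ℝ (fun x => F x w) y z = (fderiv ℝ F y z) w := by
  have h := ((ContinuousLinearMap.apply ℝ ℝ w).hasFDerivAt.comp y hF.hasFDerivAt).fderiv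
  have h2 : (fun x => F x w) = (⇑(ContinuousLinearMap.apply ℝ ℝ w)) ∘ F := rfl
  rw [h2, h]
  rfl

private lemma second_expand {n : ℕ} {g : (Fin n → ℝ) → ℝ} {y : Fin n → ℝ}
    (hF : DifferentiableAt ℝ (fderiv ℝ g) y) (d : Fin n → ℝ) :
    (fderiv ℝ (fderiv ℝ g) y d) d
      = ∑ i₂, ∑ i₁, d i₂ * (d i₁ *
          fderiv ℝ (fun x => fderiv ℝ g x (Pi.single i₁ 1)) y (Pi.single i₂ 1)) := by
  rw [fderiv_expand' (fderiv ℝ (fderiv ℝ g) y) d]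
  rw [ContinuousLinearMap.sum_apply]
  refine Finset.sum_congr rfl fun i₂ _ => ?_
  rw [ContinuousLinearMap.smul_apply, smul_eq_mul, ← Finset.mul_sum]
  congr 1
  rw [fderiv_expand (fderiv ℝ (fderiv ℝ g) y (Pi.single i₂ 1)) d]
  exact Finset.sum_congr rfl fun i₁ _ => by
    rw [fderiv_eval hF (Pi.single i₁ 1) (Pi.single i₂ 1)]

private lemma taylor1d {φ ψ : ℝ → ℝ} {B : ℝ}
    (hφ : ∀ t ∈ Set.Icc (0:ℝ) 1, HasDerivAt φ (ψ t) t)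
    (hψ : ∀ t ∈ Set.Icc (0:ℝ) 1, ψ t - ψ 0 ≤ B * t) :
    φ 1 ≤ φ 0 + ψ 0 + B / 2 := by
  set χ : ℝ → ℝ := fun t => φ t - φ 0 - t * ψ 0 - B * t^2 / 2 with hχ
  have hχd : ∀ t ∈ Set.Icc (0:ℝ) 1, HasDerivAt χ (ψ t - ψ 0 - B * t) t := by
    intro t ht
    have h1 := (hφ t ht).sub_const (φ 0)
    have h2 : HasDerivAt (fun t : ℝ => t * ψ 0) (ψ 0) t := by
      simpa using (hasDerivAt_id t).mul_const (ψ 0)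
    have h3 : HasDerivAt (fun t : ℝ => B * t^2 / 2) (B * t) t := by
      have := ((hasDerivAt_pow 2 t).const_mul B).div_const 2
      convert this using 1
      · rfl
      · rfl
      · push_cast; ring
    exact (h1.sub h2).sub h3
  have hanti : AntitoneOn χ (Set.Icc 0 1) := by
    apply antitoneOn_of_deriv_nonpos (convex_Icc 0 1)
    · exact fun t ht => (hχd t ht).continuousAt.continuousWithinAt
    · intro t ht
      rw [interior_Icc] at ht
      exact (hχd t (Set.mem_Icc_of_Ioo ht)).differentiableAt.differentiableWithinAt
    · intro t ht
      rw [interior_Icc] at ht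
      rw [(hχd t (Set.mem_Icc_of_Ioo ht)).deriv]
      have h1 := hψ t (Set.mem_Icc_of_Ioo ht)
      linarith
  have h := hanti (Set.left_mem_Icc.2 zero_le_one) (Set.right_mem_Icc.2 zero_le_one) zero_le_one
  simp only [hχ] at h
  norm_num at h
  linarith

private lemma taylor_seg {n : ℕ} {g : (Fin n → ℝ) → ℝ} {U : Set (Fin n → ℝ)}
    (hUopen : IsOpen U) (hg : ContDiffOn ℝ 2 g U)
    {a d : Fin n → ℝ} (hseg : ∀ t ∈ Set.Icc (0:ℝ) 1, a + t • d ∈ U)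
    {B : ℝ} (hB : ∀ t ∈ Set.Icc (0:ℝ) 1, |(fderiv ℝ (fderiv ℝ g) (a + t • d) d) d| ≤ B) :
    g (a + d) ≤ g a + fderiv ℝ g a d + B / 2 := by
  have hgd : ∀ x ∈ U, DifferentiableAt ℝ g x := fun x hx =>
    ((hg.differentiableOn (by norm_num)) x hx).differentiableAt (hUopen.mem_nhds hx)
  have hF : ContDiffOn ℝ 1 (fderiv ℝ g) U := hg.fderiv_of_isOpen hUopen (by norm_num)
  have hFd : ∀ x ∈ U, DifferentiableAt ℝ (fderiv ℝ g) x := fun x hx =>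
    ((hF.differentiableOn one_ne_zero) x hx).differentiableAt (hUopen.mem_nhds hx)
  set ψ : ℝ → ℝ := fun t => fderiv ℝ g (a + t • d) d with hψdef
  have hφ : ∀ t ∈ Set.Icc (0:ℝ) 1, HasDerivAt (fun s : ℝ => g (a + s • d)) (ψ t) t := by
    intro t ht
    exact (hgd _ (hseg t ht)).hasFDerivAt.comp_hasDerivAt t (seg_deriv a d t)
  have hψd : ∀ t ∈ Set.Icc (0:ℝ) 1,
      HasDerivWithinAt ψ ((fderiv ℝ (fderiv ℝ g) (a + t • d) d) d) (Set.Icc 0 1) t := by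
    intro t ht
    have h1 : HasDerivAt (fun s : ℝ => fderiv ℝ g (a + s • d))
        (fderiv ℝ (fderiv ℝ g) (a + t • d) d) t :=
      (hFd _ (hseg t ht)).hasFDerivAt.comp_hasDerivAt t (seg_deriv a d t)
    exact (((ContinuousLinearMap.apply ℝ ℝ d).hasFDerivAt.comp_hasDerivAt t h1)).hasDerivWithinAt
  have hψlip : ∀ t ∈ Set.Icc (0:ℝ) 1, ψ t - ψ 0 ≤ B * t := by
    intro t ht
    have := (convex_Icc (0:ℝ) 1).norm_image_sub_le_of_norm_hasDerivWithin_le hψd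
      (fun s hs => by simpa using hB s hs) (Set.left_mem_Icc.2 zero_le_one) ht
    rw [Real.norm_eq_abs, Real.norm_eq_abs] at this
    have h2 : |t - 0| = t := by rw [sub_zero, abs_of_nonneg ht.1]
    rw [h2] at this
    calc ψ t - ψ 0 ≤ |ψ t - ψ 0| := le_abs_self _
    _ ≤ B * t := this
  have := taylor1d hφ hψlip
  simpa [hψdef] using this
end Aux

/-- Invariant lower bound on constraint slack along the iterates:
under the project-and-filter recursion `u (k+1) = u k + K k • (v k - u k)` with
(i) `g (u k) + K k Σ_i κ i |v k i - u k i| ≤ 0` and (ii) the descent condition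
`∇g(u k)ᵀ(v k - u k) ≤ -δ` whenever `g (u k) ≥ -ε`, and with `|∂g/∂u_i| ≤ κ̃ i ≤ γ κ i`
on `I`, `γ ∈ [0,1)`, `g (u 0) < 0`, one has for every `k`:
`-g (u k) ≥ min [(1-γ)ε, 2(1-γ)δ²/Q̄, -g (u 0)]`. -/
theorem invariant_slack_lower_bound
    {n : ℕ} (uL uU : Fin n → ℝ)
    (g : (Fin n → ℝ) → ℝ)
    (U : Set (Fin n → ℝ)) (hUopen : IsOpen U) (hIU : Set.Icc uL uU ⊆ U)
    (hg : ContDiffOn ℝ 2 g U)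
    (κ : Fin n → ℝ) (hκpos : ∀ i, 0 < κ i)
    (hκ : ∀ u ∈ Set.Icc uL uU, ∀ i, |fderiv ℝ g u (Pi.single i 1)| < κ i)
    (M : Fin n → Fin n → ℝ) (hMpos : ∀ i₁ i₂, 0 < M i₁ i₂)
    (hM : ∀ u ∈ Set.Icc uL uU, ∀ i₁ i₂,
      |fderiv ℝ (fun x => fderiv ℝ g x (Pi.single i₁ 1)) u (Pi.single i₂ 1)| < M i₁ i₂)
    (γ : ℝ) (hγ : γ ∈ Set.Ico (0 : ℝ) 1)
    (κt : Fin n → ℝ)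
    (hκt : ∀ u ∈ Set.Icc uL uU, ∀ i, |fderiv ℝ g u (Pi.single i 1)| ≤ κt i)
    (hκtγ : ∀ i, κt i ≤ γ * κ i)
    (ε δ : ℝ) (hε : 0 < ε) (hδ : 0 < δ)
    (u v : ℕ → (Fin n → ℝ)) (K : ℕ → ℝ)
    (huI : ∀ k, u k ∈ Set.Icc uL uU) (hvI : ∀ k, v k ∈ Set.Icc uL uU)
    (hKmem : ∀ k, K k ∈ Set.Icc (0 : ℝ) 1)
    (hupd : ∀ k, u (k + 1) = u k + K k • (v k - u k))
    (hfeas : ∀ k, g (u k) + K k * ∑ i, κ i * |v k i - u k i| ≤ 0)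
    (hdesc : ∀ k, g (u k) ≥ -ε → fderiv ℝ g (u k) (v k - u k) ≤ -δ)
    (h0 : g (u 0) < 0) :
    ∀ k, min ((1 - γ) * ε)
        (min (2 * (1 - γ) * δ ^ 2 /
            ∑ i₁, ∑ i₂, M i₁ i₂ * (uU i₁ - uL i₁) * (uU i₂ - uL i₂))
          (-g (u 0)))
      ≤ -g (u k) := by
  obtain ⟨hγ0, hγ1⟩ := hγ
  set Q := ∑ i₁, ∑ i₂, M i₁ i₂ * (uU i₁ - uL i₁) * (uU i₂ - uL i₂) with hQdef
  -- basic facts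
  have hsumnn : ∀ k, (0:ℝ) ≤ ∑ i, κ i * |v k i - u k i| := fun k =>
    Finset.sum_nonneg fun i _ => mul_nonneg (hκpos i).le (abs_nonneg _)
  have hfeas' : ∀ k, K k * ∑ i, κ i * |v k i - u k i| ≤ -g (u k) := fun k => by
    linarith [hfeas k]
  have hgnonpos : ∀ k, g (u k) ≤ 0 := fun k => by
    have := mul_nonneg (hKmem k).1 (hsumnn k)
    linarith [hfeas k]
  by_cases hQpos : 0 < Q
  swap
  · intro k
    have hdivle : 2 * (1 - γ) * δ ^ 2 / Q ≤ 0 := by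
      apply div_nonpos_of_nonneg_of_nonpos
      · nlinarith [sq_nonneg δ, mul_nonneg (by linarith : (0:ℝ) ≤ 1 - γ) (sq_nonneg δ)]
      · exact not_lt.mp hQpos
    have h1 : min ((1 - γ) * ε) (min (2 * (1 - γ) * δ ^ 2 / Q) (-g (u 0)))
        ≤ 2 * (1 - γ) * δ ^ 2 / Q := (min_le_right _ _).trans (min_le_left _ _)
    have := hgnonpos k
    linarith
  -- main case
  have hgdiff : ∀ x ∈ U, DifferentiableAt ℝ g x := fun x hx =>
    ((hg.differentiableOn (by norm_num)) x hx).differentiableAt (hUopen.mem_nhds hx)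
  have hF : ContDiffOn ℝ 1 (fderiv ℝ g) U := hg.fderiv_of_isOpen hUopen (by norm_num)
  have hFd : ∀ x ∈ U, DifferentiableAt ℝ (fderiv ℝ g) x := fun x hx =>
    ((hF.differentiableOn one_ne_zero) x hx).differentiableAt (hUopen.mem_nhds hx)
  have hΔ : ∀ k i, |v k i - u k i| ≤ uU i - uL i := by
    intro k i
    have h1 := (huI k).1 i
    have h2 := (huI k).2 i
    have h3 := (hvI k).1 i
    have h4 := (hvI k).2 i
    rw [abs_le]; constructor <;> linarith
  have hdi : ∀ k (i : Fin n), (K k • (v k - u k)) i = K k * (v k i - u k i) := by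
    intro k i; simp
  have habsdi : ∀ k (i : Fin n), |(K k • (v k - u k)) i| = K k * |v k i - u k i| := by
    intro k i
    rw [hdi, abs_mul, abs_of_nonneg (hKmem k).1]
  have hmem : ∀ k, ∀ t ∈ Set.Icc (0:ℝ) 1,
      u k + t • (K k • (v k - u k)) ∈ Set.Icc uL uU := by
    intro k t ht
    rw [smul_smul]
    refine (convex_Icc uL uU).add_smul_sub_mem (huI k) (hvI k) ⟨?_, ?_⟩
    · exact mul_nonneg ht.1 (hKmem k).1
    · exact mul_le_one₀ ht.2 (hKmem k).1 (hKmem k).2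
  -- contraction
  have hcontr : ∀ k, (1 - γ) * (-g (u k)) ≤ -g (u (k+1)) := by
    intro k
    have hbound : ∀ t ∈ Set.Icc (0:ℝ) 1,
        |fderiv ℝ g (u k + t • (K k • (v k - u k))) (K k • (v k - u k))|
          ≤ γ * (K k * ∑ i, κ i * |v k i - u k i|) := by
      intro t ht
      set y := u k + t • (K k • (v k - u k)) with hy
      have hyI := hmem k t ht
      rw [fderiv_expand]
      calc |∑ i, (K k • (v k - u k)) i * fderiv ℝ g y (Pi.single i 1)|
          ≤ ∑ i, |(K k • (v k - u k)) i * fderiv ℝ g y (Pi.single i 1)| :=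
            Finset.abs_sum_le_sum_abs _ _
        _ ≤ ∑ i, γ * (K k * (κ i * |v k i - u k i|)) := by
            refine Finset.sum_le_sum fun i _ => ?_
            rw [abs_mul, habsdi]
            have h1 := hκt y hyI i
            have h2 := hκtγ i
            have h3 := abs_nonneg (v k i - u k i)
            have h4 := abs_nonneg (fderiv ℝ g y (Pi.single i 1))
            have h5 := (hKmem k).1
            nlinarith [mul_le_mul_of_nonneg_left
              (mul_le_mul_of_nonneg_left (h1.trans h2) h3) h5]
        _ = γ * (K k * ∑ i, κ i * |v k i - u k i|) := by
            rw [Finset.mul_sum, Finset.mul_sum]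
    have hmvt := mvt_seg hUopen hgdiff (fun t ht => hIU (hmem k t ht)) hbound
    rw [hupd k]
    have h6 := abs_le.1 hmvt
    have h7 : γ * (K k * ∑ i, κ i * |v k i - u k i|) ≤ γ * (-g (u k)) :=
      mul_le_mul_of_nonneg_left (hfeas' k) hγ0
    have h8 := h6.2
    linarith
  -- lower bound on Σ κ|Δ| in the descent case
  have hdlow : ∀ k, g (u k) ≥ -ε → δ ≤ ∑ i, κ i * |v k i - u k i| := by
    intro k hk
    have h1 := hdesc k hk
    have h2 : |fderiv ℝ g (u k) (v k - u k)| ≤ ∑ i, κ i * |v k i - u k i| := by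
      rw [fderiv_expand]
      calc |∑ i, (v k - u k) i * fderiv ℝ g (u k) (Pi.single i 1)|
          ≤ ∑ i, |(v k - u k) i * fderiv ℝ g (u k) (Pi.single i 1)| :=
            Finset.abs_sum_le_sum_abs _ _
        _ ≤ ∑ i, κ i * |v k i - u k i| := by
            refine Finset.sum_le_sum fun i _ => ?_
            rw [abs_mul]
            have h3 := hκt (u k) (huI k) i
            have h4 := hκtγ i
            have h5 := hκpos i
            have h6 := abs_nonneg (v k i - u k i)
            have h7 := abs_nonneg (fderiv ℝ g (u k) (Pi.single i 1))
            have h8 : ((v k - u k) i : ℝ) = v k i - u k i := by simp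
            rw [h8]
            nlinarith [mul_le_mul_of_nonneg_left (h3.trans h4) h6,
              mul_nonneg (mul_nonneg (by linarith : (0:ℝ) ≤ 1 - γ) h5.le) h6]
    have h9 := (abs_le.1 h2).1
    linarith
  -- Taylor step in the descent case
  have htay : ∀ k, g (u k) ≥ -ε →
      g (u (k+1)) ≤ g (u k) - K k * δ + K k ^ 2 * Q / 2 := by
    intro k hk
    have hB : ∀ t ∈ Set.Icc (0:ℝ) 1,
        |(fderiv ℝ (fderiv ℝ g) (u k + t • (K k • (v k - u k))) (K k • (v k - u k)))
            (K k • (v k - u k))| ≤ K k ^ 2 * Q := by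
      intro t ht
      set y := u k + t • (K k • (v k - u k)) with hy
      have hyI := hmem k t ht
      rw [second_expand (hFd y (hIU hyI))]
      calc |∑ i₂, ∑ i₁, (K k • (v k - u k)) i₂ * ((K k • (v k - u k)) i₁ *
              fderiv ℝ (fun x => fderiv ℝ g x (Pi.single i₁ 1)) y (Pi.single i₂ 1))|
          ≤ ∑ i₂, |∑ i₁, (K k • (v k - u k)) i₂ * ((K k • (v k - u k)) i₁ *
              fderiv ℝ (fun x => fderiv ℝ g x (Pi.single i₁ 1)) y (Pi.single i₂ 1))| :=
            Finset.abs_sum_le_sum_abs _ _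
        _ ≤ ∑ i₂, ∑ i₁, |(K k • (v k - u k)) i₂ * ((K k • (v k - u k)) i₁ *
              fderiv ℝ (fun x => fderiv ℝ g x (Pi.single i₁ 1)) y (Pi.single i₂ 1))| :=
            Finset.sum_le_sum fun i₂ _ => Finset.abs_sum_le_sum_abs _ _
        _ ≤ ∑ i₂, ∑ i₁, K k ^ 2 * (M i₁ i₂ * (uU i₁ - uL i₁) * (uU i₂ - uL i₂)) := by
            refine Finset.sum_le_sum fun i₂ _ => Finset.sum_le_sum fun i₁ _ => ?_
            rw [abs_mul, abs_mul, habsdi, habsdi]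
            have h1 := (hM y hyI i₁ i₂).le
            have h2 := hΔ k i₁
            have h3 := hΔ k i₂
            have h4 := abs_nonneg (v k i₁ - u k i₁)
            have h5 := abs_nonneg (v k i₂ - u k i₂)
            have h6 := abs_nonneg
              (fderiv ℝ (fun x => fderiv ℝ g x (Pi.single i₁ 1)) y (Pi.single i₂ 1))
            have h7 := (hKmem k).1
            have h8 := (hMpos i₁ i₂).le
            nlinarith [mul_le_mul_of_nonneg_left
              (mul_le_mul h3 (mul_le_mul h2 h1 h6 (h4.trans h2)) (mul_nonneg h4 h6)
                (h5.trans h3)) (sq_nonneg (K k))]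
        _ = K k ^ 2 * Q := by
            rw [hQdef, Finset.sum_comm, Finset.mul_sum]
            refine Finset.sum_congr rfl fun i₁ _ => ?_
            rw [Finset.mul_sum]
    have htt := taylor_seg hUopen hg (fun t ht => hIU (hmem k t ht)) hB
    rw [← hupd k] at htt
    have hlin : fderiv ℝ g (u k) (K k • (v k - u k)) = K k * fderiv ℝ g (u k) (v k - u k) := by
      rw [map_smul]; rfl
    rw [hlin] at htt
    have h1 := hdesc k hk
    have h2 : K k * fderiv ℝ g (u k) (v k - u k) ≤ K k * (-δ) :=
      mul_le_mul_of_nonneg_left h1 (hKmem k).1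
    linarith
  -- induction
  intro k
  induction k with
  | zero => exact (min_le_right _ _).trans (min_le_right _ _)
  | succ k ih =>
    by_cases hk : -ε ≤ g (u k)
    · have htk := htay k hk
      by_cases hKQ : K k * Q ≤ 2 * δ
      · have hKK : K k * (K k * Q) ≤ K k * (2 * δ) :=
          mul_le_mul_of_nonneg_left hKQ (hKmem k).1
        have hstep : g (u (k+1)) ≤ g (u k) := by nlinarith
        linarith
      · push_neg at hKQ
        have h2 := hdlow k hk
        have h3 := hfeas' k
        have e1 : K k * δ ≤ K k * ∑ i, κ i * |v k i - u k i| :=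
          mul_le_mul_of_nonneg_left h2 (hKmem k).1
        have h1 : 2 * δ ^ 2 / Q ≤ -g (u k) := by
          rw [div_le_iff₀ hQpos]
          nlinarith
        have h4 := hcontr k
        have h5 : 2 * (1 - γ) * δ ^ 2 / Q ≤ (1 - γ) * (-g (u k)) := by
          have h6 : 2 * (1 - γ) * δ ^ 2 / Q = (1 - γ) * (2 * δ ^ 2 / Q) := by ring
          rw [h6]
          exact mul_le_mul_of_nonneg_left h1 (by linarith)
        calc min ((1 - γ) * ε) (min (2 * (1 - γ) * δ ^ 2 / Q) (-g (u 0)))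
            ≤ 2 * (1 - γ) * δ ^ 2 / Q := (min_le_right _ _).trans (min_le_left _ _)
          _ ≤ -g (u (k+1)) := by linarith
    · push_neg at hk
      have h4 := hcontr k
      have h5 : (1 - γ) * ε ≤ -g (u (k+1)) := by nlinarith
      exact (min_le_left _ _).trans h5
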